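/- Fix α > 0, ν > 0 with α < 1/2 and set R_n = 2·log(n/ν). Let ρ_n(r) = α·sinh(α r)/(cosh(α R_n) − 1)·1_{r < R_n}. Then for every continuous non-negative function φ on [0,∞) with compact support, n·∫₀^∞ φ(n^{1/2−α}·r)·ρ_n(r) dr converges as n → ∞ to ∫₀^∞ φ(u)·2α²ν^{2α}·u du. -/

import Mathlib

open Real Filter MeasureTheory

/-- Radius of the random hyperbolic graph: `R_n = 2 log(n/ν)`. -/
noncomputable def Rn (ν : ℝ) (n : ℕ) : ℝ := 2 * Real.log (n / ν)

/-- Radial density of the random hyperbolic graph: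
`ρ_n(r) = α sinh(αr)/(cosh(αR_n) − 1)` for `0 ≤ r < R_n` and `0` otherwise. -/
noncomputable def rhon (α ν : ℝ) (n : ℕ) (r : ℝ) : ℝ :=
  if r < Rn ν n then α * Real.sinh (α * r) / (Real.cosh (α * Rn ν n) - 1) else 0


lemma l_sinh_le {x : ℝ} (hx : 0 ≤ x) : Real.sinh x ≤ x * Real.exp x := by
  rw [Real.sinh_eq]
  have h := Real.add_one_le_exp (-(2*x))
  have h2 : Real.exp x * (1 - 2*x) ≤ Real.exp x * Real.exp (-(2*x)) :=
    mul_le_mul_of_nonneg_left (by linarith) (Real.exp_pos x).le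
  rw [← Real.exp_add] at h2
  rw [show x + -(2*x) = -x by ring] at h2
  nlinarith [Real.exp_pos x]

lemma l_slope : Tendsto (fun x : ℝ => Real.sinh x / x) (nhdsWithin 0 {0}ᶜ) (nhds 1) := by
  have h := (Real.hasDerivAt_sinh 0)
  rw [hasDerivAt_iff_tendsto_slope] at h
  simp only [Real.cosh_zero] at h
  refine h.congr' ?_
  filter_upwards [self_mem_nhdsWithin] with x _
  rw [slope_def_field]
  simp [Real.sinh_zero]

lemma l_exp_Rn {α ν : ℝ} (hν : 0 < ν) {n : ℕ} (hn : 1 ≤ n) :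
    Real.exp (α * Rn ν n) = ((n : ℝ) / ν) ^ (2 * α) := by
  have hn0 : (0:ℝ) < (n:ℝ) := by exact_mod_cast hn
  have hpos : (0:ℝ) < (n:ℝ) / ν := by positivity
  rw [Real.rpow_def_of_pos hpos, Rn]; ring_nf

lemma l_ratio (α ν : ℝ) (hα : 0 < α) (hν : 0 < ν) :
    Tendsto (fun n : ℕ => ((n:ℝ)) ^ (2*α) / (Real.cosh (α * Rn ν n) - 1)) atTop
      (nhds (2 * ν ^ (2*α))) := by
  have hν2 : (0:ℝ) < ν ^ (2*α) := Real.rpow_pos_of_pos hν _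
  have hnc : Tendsto (fun n : ℕ => (n:ℝ)) atTop atTop := tendsto_natCast_atTop_atTop
  have hinv : Tendsto (fun n : ℕ => ((n:ℝ) ^ (2*α))⁻¹) atTop (nhds 0) :=
    (Filter.Tendsto.inv_tendsto_atTop ((tendsto_rpow_atTop (by positivity)).comp hnc))
  have hg : Tendsto (fun n : ℕ => (Real.cosh (α * Rn ν n) - 1) / (n:ℝ) ^ (2*α)) atTop
      (nhds ((ν ^ (2*α))⁻¹ / 2)) := by
    have key : ∀ᶠ n : ℕ in atTop,
        (Real.cosh (α * Rn ν n) - 1) / (n:ℝ) ^ (2*α)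
        = (ν ^ (2*α))⁻¹ / 2 + (ν ^ (2*α)) * (((n:ℝ) ^ (2*α))⁻¹ * ((n:ℝ) ^ (2*α))⁻¹) / 2
          - ((n:ℝ) ^ (2*α))⁻¹ := by
      filter_upwards [eventually_ge_atTop 1] with n hn
      have hn0 : (0:ℝ) < (n:ℝ) := by exact_mod_cast hn
      have hdiv : ((n : ℝ) / ν) ^ (2 * α) = (n:ℝ) ^ (2*α) / ν ^ (2*α) :=
        Real.div_rpow hn0.le hν.le _
      have hnr : (0:ℝ) < (n:ℝ) ^ (2*α) := Real.rpow_pos_of_pos hn0 _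
      rw [Real.cosh_eq, Real.exp_neg, l_exp_Rn hν hn, hdiv]
      field_simp
    rw [show ((ν ^ (2*α))⁻¹ / 2 : ℝ)
        = (ν ^ (2*α))⁻¹ / 2 + (ν ^ (2*α)) * ((0:ℝ) * 0) / 2 - 0 by ring]
    exact Tendsto.congr' (key.mono fun n h => h.symm)
      (((tendsto_const_nhds.add (((hinv.mul hinv).const_mul _).div_const 2)).sub hinv))
  have hne : ((ν ^ (2*α))⁻¹ / 2 : ℝ) ≠ 0 := by positivity
  have h2 := hg.inv₀ hne
  rw [show (((ν ^ (2*α))⁻¹ / 2 : ℝ))⁻¹ = 2 * ν ^ (2*α) by field_simp] at h2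
  refine h2.congr fun n => ?_
  rw [inv_div]

lemma l_key {α : ℝ} {n : ℕ} (hn : 1 ≤ n) :
    (n:ℝ) * (((n:ℝ) ^ ((1:ℝ)/2 - α))⁻¹ * ((n:ℝ) ^ ((1:ℝ)/2 - α))⁻¹) = (n:ℝ) ^ (2*α) := by
  have hn0 : (0:ℝ) < (n:ℝ) := by exact_mod_cast hn
  rw [← Real.rpow_neg hn0.le]
  nth_rewrite 1 [← Real.rpow_one (n:ℝ)]
  rw [← Real.rpow_add hn0, ← Real.rpow_add hn0,
    show (1:ℝ) + (-((1:ℝ)/2-α) + -((1:ℝ)/2-α)) = 2*α by ring]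

/-- Intensity convergence in the regime `α < 1/2`: for every `φ ∈ C_c⁺([0,∞))`,
`n ∫₀^∞ φ(n^{1/2−α} r) ρ_n(r) dr → ∫₀^∞ φ(u) · 2α²ν^{2α} u du`. -/
theorem stmt_12 (α ν : ℝ) (hα : 0 < α) (hα2 : α < 1 / 2) (hν : 0 < ν)
    (φ : ℝ → ℝ) (hc : Continuous φ) (hsupp : HasCompactSupport φ) (hpos : 0 ≤ φ) :
    Tendsto (fun n : ℕ =>
        (n : ℝ) * ∫ r in Set.Ioi (0:ℝ), φ ((n : ℝ) ^ ((1:ℝ)/2 - α) * r) * rhon α ν n r)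
      atTop
      (nhds (∫ u in Set.Ioi (0:ℝ), φ u * (2 * α ^ 2 * ν ^ (2 * α) * u))) := by
  have hhalf : (0:ℝ) < 1/2 - α := by linarith
  set c : ℕ → ℝ := fun n => (n:ℝ) ^ ((1:ℝ)/2 - α) with hc_def
  set G : ℕ → ℝ → ℝ := fun n u =>
    ((n:ℝ) * (c n)⁻¹) * (φ u * rhon α ν n ((c n)⁻¹ * u)) with hG_def
  have hctend : Tendsto c atTop atTop :=
    (tendsto_rpow_atTop hhalf).comp tendsto_natCast_atTop_atTop
  have hcinv : Tendsto (fun n => (c n)⁻¹) atTop (nhds 0) :=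
    hctend.inv_tendsto_atTop
  have hcpos : ∀ n : ℕ, 1 ≤ n → 0 < c n := fun n hn =>
    Real.rpow_pos_of_pos (by exact_mod_cast hn) _
  -- Step A : eventual equality with ∫ G n
  have stepA : ∀ᶠ n : ℕ in atTop,
      (n : ℝ) * ∫ r in Set.Ioi (0:ℝ), φ (c n * r) * rhon α ν n r
        = ∫ u in Set.Ioi (0:ℝ), G n u := by
    filter_upwards [eventually_ge_atTop 1] with n hn
    have hcn : 0 < c n := hcpos n hn
    have hcv := integral_comp_mul_left_Ioi
      (fun u => φ u * rhon α ν n ((c n)⁻¹ * u)) 0 hcn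
    simp only [inv_mul_cancel_left₀ hcn.ne', mul_zero, smul_eq_mul] at hcv
    rw [hcv, hG_def]
    rw [MeasureTheory.integral_const_mul]
    ring
  refine Tendsto.congr' (stepA.mono fun n h => h.symm) ?_
  -- dominated convergence
  obtain ⟨M0, hM0⟩ := hsupp.isCompact.isBounded.subset_closedBall 0
  set M : ℝ := max M0 1 with hM_def
  have hM1 : (1:ℝ) ≤ M := le_max_right _ _
  have hMpos : (0:ℝ) < M := by linarith
  have hsupp_le : ∀ u : ℝ, φ u ≠ 0 → |u| ≤ M := by
    intro u hu
    have : u ∈ tsupport φ := subset_closure (by simpa [Function.mem_support] using hu)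
    have := hM0 this
    rw [Metric.mem_closedBall, Real.dist_eq, sub_zero] at this
    exact this.trans (le_max_left _ _)
  have hmeas : ∀ n : ℕ, AEStronglyMeasurable (G n)
      (volume.restrict (Set.Ioi (0:ℝ))) := by
    intro n
    have hrm : Measurable (rhon α ν n) := by
      refine Measurable.ite measurableSet_Iio ?_ measurable_const
      exact ((continuous_const.mul
        (Real.continuous_sinh.comp (continuous_const.mul continuous_id))).div_const
          _).measurable
    exact (((hc.measurable.mul (hrm.comp (measurable_const_mul
      ((c n)⁻¹)))).const_mul _).aestronglyMeasurable).restrict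
  refine tendsto_integral_filter_of_dominated_convergence
    (fun u => φ u * (12 * α^2 * ν^(2*α) * u))
    (Eventually.of_forall hmeas) ?_ ?_ ?_
  · -- bound
    have hev2 : ∀ᶠ n : ℕ in atTop, α * M * (c n)⁻¹ ≤ 1 := by
      have ht : Tendsto (fun n => α * M * (c n)⁻¹) atTop (nhds (α * M * 0)) :=
        hcinv.const_mul _
      rw [mul_zero] at ht
      exact ht.eventually (eventually_le_nhds one_pos)
    have hev3 : ∀ᶠ n : ℕ in atTop, (4:ℝ) ≤ ((n:ℝ)/ν) ^ (2*α) := by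
      have : Tendsto (fun n : ℕ => ((n:ℝ)/ν) ^ (2*α)) atTop atTop :=
        (tendsto_rpow_atTop (by positivity)).comp
          (tendsto_natCast_atTop_atTop.atTop_div_const hν)
      exact this.eventually_ge_atTop 4
    filter_upwards [eventually_ge_atTop 1, hev2, hev3] with n hn1 hn2 hn3
    rw [ae_restrict_iff' measurableSet_Ioi]
    refine ae_of_all _ fun u hu => ?_
    have hu0 : (0:ℝ) < u := hu
    have hcn : 0 < c n := hcpos n hn1
    have hn0 : (0:ℝ) < (n:ℝ) := by exact_mod_cast hn1
    by_cases hφu : φ u = 0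
    · simp [hG_def, hφu, mul_nonneg, hu0.le]
    have huM : u ≤ M := (le_abs_self u).trans (hsupp_le u hφu)
    have ht0 : (0:ℝ) < ((n:ℝ)/ν) ^ (2*α) := by positivity
    have hD : ((n:ℝ)/ν) ^ (2*α) / 4 ≤ Real.cosh (α * Rn ν n) - 1 := by
      have h1 : Real.exp (α * Rn ν n) / 2 ≤ Real.cosh (α * Rn ν n) := by
        rw [Real.cosh_eq]
        have := (Real.exp_pos (-(α * Rn ν n))).le
        linarith
      rw [l_exp_Rn hν hn1] at h1
      linarith
    have hDpos : 0 < Real.cosh (α * Rn ν n) - 1 := lt_of_lt_of_le (by positivity) hD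
    have hx0 : 0 ≤ α * ((c n)⁻¹ * u) := by positivity
    have hx1 : α * ((c n)⁻¹ * u) ≤ 1 := by
      have h' : α * ((c n)⁻¹ * u) ≤ α * M * (c n)⁻¹ := by
        rw [show α * M * (c n)⁻¹ = α * ((c n)⁻¹ * M) by ring]
        gcongr
      linarith
    have hsinh : Real.sinh (α * ((c n)⁻¹ * u)) ≤ 3 * (α * ((c n)⁻¹ * u)) := by
      have h1 := l_sinh_le hx0
      have h2 : Real.exp (α * ((c n)⁻¹ * u)) ≤ Real.exp 1 := Real.exp_le_exp.2 hx1
      have h3 : Real.exp 1 < 3 := lt_trans Real.exp_one_lt_d9 (by norm_num)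
      nlinarith
    have hsnn : 0 ≤ Real.sinh (α * ((c n)⁻¹ * u)) := Real.sinh_nonneg_iff.2 hx0
    have hGnn : 0 ≤ G n u := by
      rw [hG_def]
      simp only
      apply mul_nonneg (by positivity)
      apply mul_nonneg (hpos u)
      rw [rhon]
      split
      · exact div_nonneg (mul_nonneg hα.le hsnn) hDpos.le
      · exact le_refl _
    rw [Real.norm_eq_abs, abs_of_nonneg hGnn]
    rw [hG_def]
    simp only [rhon]
    split
    · -- main case
      have hNpos : (0:ℝ) < (n:ℝ)^(2*α) := Real.rpow_pos_of_pos hn0 _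
      have hdiv : ((n:ℝ)/ν)^(2*α) = (n:ℝ)^(2*α)/ν^(2*α) := Real.div_rpow hn0.le hν.le _
      have hkey : (n:ℝ) * ((c n)⁻¹ * (c n)⁻¹) = (n:ℝ)^(2*α) := l_key hn1
      calc ((n:ℝ) * (c n)⁻¹) * (φ u * (α * Real.sinh (α * ((c n)⁻¹ * u))
            / (Real.cosh (α * Rn ν n) - 1)))
          ≤ ((n:ℝ) * (c n)⁻¹) * (φ u * (α * (3 * (α * ((c n)⁻¹ * u)))
            / (((n:ℝ)/ν) ^ (2*α) / 4))) := by
            gcongr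
            all_goals first
              | exact hpos u
              | exact mul_nonneg hα.le hsnn
              | exact hsinh
              | exact hD
              | positivity
        _ = φ u * (12 * α ^ 2 * ν ^ (2 * α) * u)
              * (((n:ℝ) * ((c n)⁻¹ * (c n)⁻¹)) / (n:ℝ)^(2*α)) := by
            rw [hdiv]; field_simp; ring
        _ = φ u * (12 * α ^ 2 * ν ^ (2 * α) * u) := by
            rw [hkey, div_self hNpos.ne', mul_one]
    · have : (0:ℝ) ≤ φ u * (12 * α ^ 2 * ν ^ (2 * α) * u) :=
        mul_nonneg (hpos u) (mul_nonneg (by positivity) hu0.le)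
      simpa using this
  · -- bound integrable
    have hb : Continuous fun u => φ u * (12 * α^2 * ν^(2*α) * u) := by
      fun_prop
    have hbs : HasCompactSupport fun u => φ u * (12 * α^2 * ν^(2*α) * u) :=
      hsupp.mul_right
    exact (hb.integrable_of_hasCompactSupport hbs).restrict
  · -- pointwise limit
    rw [ae_restrict_iff' measurableSet_Ioi]
    refine ae_of_all _ fun u hu => ?_
    have hu0 : (0:ℝ) < u := hu
    have hratio := l_ratio α ν hα hν
    have hxt : Tendsto (fun n : ℕ => α * ((c n)⁻¹ * u)) atTop (nhds 0) := by
      have := (hcinv.mul_const u).const_mul α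
      simpa using this
    have hxne : ∀ᶠ n : ℕ in atTop, α * ((c n)⁻¹ * u) ∈ ({0}ᶜ : Set ℝ) := by
      filter_upwards [eventually_ge_atTop 1] with n hn
      have hcn := hcpos n hn
      simp only [Set.mem_compl_iff, Set.mem_singleton_iff]
      positivity
    have hsl : Tendsto (fun n : ℕ =>
        Real.sinh (α * ((c n)⁻¹ * u)) / (α * ((c n)⁻¹ * u))) atTop (nhds 1) :=
      l_slope.comp (tendsto_nhdsWithin_iff.2 ⟨hxt, hxne⟩)
    have hmain : Tendsto (fun n : ℕ => (φ u * (α^2 * u))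
        * (Real.sinh (α * ((c n)⁻¹ * u)) / (α * ((c n)⁻¹ * u)))
        * ((n:ℝ) ^ (2*α) / (Real.cosh (α * Rn ν n) - 1))) atTop
        (nhds (φ u * (2 * α ^ 2 * ν ^ (2 * α) * u))) := by
      have h := ((tendsto_const_nhds (x := φ u * (α^2*u))).mul hsl).mul hratio
      rw [show φ u * (α^2*u) * 1 * (2 * ν ^ (2*α))
          = φ u * (2 * α ^ 2 * ν ^ (2 * α) * u) by ring] at h
      exact h
    refine Tendsto.congr' ?_ hmain
    have h1' : ∀ᶠ n : ℕ in atTop, (c n)⁻¹ * u < 1 := by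
      have := hcinv.mul_const u
      rw [zero_mul] at this
      exact this.eventually (eventually_lt_nhds one_pos)
    have h2' : ∀ᶠ n : ℕ in atTop, (1:ℝ) ≤ Rn ν n := by
      have hRtend : Tendsto (fun n : ℕ => Rn ν n) atTop atTop := by
        have h := Real.tendsto_log_atTop.comp
          (tendsto_natCast_atTop_atTop.atTop_div_const hν)
        have := h.const_mul_atTop (show (0:ℝ) < 2 by norm_num)
        simpa [Rn, Function.comp] using this
      exact hRtend.eventually_ge_atTop 1
    have hev3' : ∀ᶠ n : ℕ in atTop, (4:ℝ) ≤ ((n:ℝ)/ν) ^ (2*α) := by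
      have : Tendsto (fun n : ℕ => ((n:ℝ)/ν) ^ (2*α)) atTop atTop :=
        (tendsto_rpow_atTop (by positivity)).comp
          (tendsto_natCast_atTop_atTop.atTop_div_const hν)
      exact this.eventually_ge_atTop 4
    filter_upwards [eventually_ge_atTop 1, h1', h2', hev3'] with n hn1 ha hb htge
    have hcn : 0 < c n := hcpos n hn1
    have hn0 : (0:ℝ) < (n:ℝ) := by exact_mod_cast hn1
    have ht0 : (0:ℝ) < ((n:ℝ)/ν) ^ (2*α) := by positivity
    have hDpos : 0 < Real.cosh (α * Rn ν n) - 1 := by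
      have h1 : Real.exp (α * Rn ν n) / 2 ≤ Real.cosh (α * Rn ν n) := by
        rw [Real.cosh_eq]
        have := (Real.exp_pos (-(α * Rn ν n))).le
        linarith
      rw [l_exp_Rn hν hn1] at h1
      linarith
    have hkey : (n:ℝ) * ((c n)⁻¹ * (c n)⁻¹) = (n:ℝ)^(2*α) := l_key hn1
    rw [hG_def]
    simp only [rhon]
    rw [if_pos (lt_of_lt_of_le ha hb)]
    rw [← hkey]
    field_simp
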